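/- For positive semidefinite matrices T, T̂ and λ > 0, the function g(T̂) = tr((T^{1/2} T̂ T^{1/2} + λ²I)^{1/2} − λI) is Lipschitz in the Hilbert-Schmidt norm with constant ‖T‖₂/(2λ): |g(T̂) − g(T̂')| ≤ (‖T‖₂/(2λ))·‖T̂ − T̂'‖₂. -/

import Mathlib

open Matrix Classical

/-- Square root of a positive semidefinite matrix (0 if not PSD). -/
noncomputable def psqrt {d : ℕ} (A : Matrix (Fin d) (Fin d) ℝ) : Matrix (Fin d) (Fin d) ℝ :=
  if h : A.PosSemidef then
    (h.1.eigenvectorUnitary : Matrix (Fin d) (Fin d) ℝ) *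
      diagonal ((↑) ∘ (√·) ∘ h.1.eigenvalues) *
      (star h.1.eigenvectorUnitary : Matrix (Fin d) (Fin d) ℝ)
  else 0

/-- Frobenius (Hilbert-Schmidt) norm. -/
noncomputable def frob {m n : ℕ} (A : Matrix (Fin m) (Fin n) ℝ) : ℝ :=
  Real.sqrt ((Aᵀ * A).trace)

variable {d : ℕ}
local notation "Mat" => Matrix (Fin d) (Fin d) ℝ

noncomputable def Matrix.PosSemidef.sqrt {A : Mat} (h : A.PosSemidef) : Mat :=
    (h.1.eigenvectorUnitary : Matrix (Fin d) (Fin d) ℝ) *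
      diagonal ((↑) ∘ (√·) ∘ h.1.eigenvalues) *
      (star h.1.eigenvectorUnitary : Matrix (Fin d) (Fin d) ℝ)

theorem Matrix.PosSemidef.posSemidef_sqrt {A : Mat} (h : A.PosSemidef) : h.sqrt.PosSemidef := by
  have hd : (diagonal ((↑) ∘ (√·) ∘ h.1.eigenvalues : Fin d → ℝ)).PosSemidef :=
    Matrix.PosSemidef.diagonal (fun i => Real.sqrt_nonneg _)
  have := hd.mul_mul_conjTranspose_same (h.1.eigenvectorUnitary : Mat)
  rw [Matrix.PosSemidef.sqrt, Matrix.star_eq_conjTranspose]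
  exact this

theorem Matrix.PosSemidef.sqrt_mul_self {A : Mat} (h : A.PosSemidef) : h.sqrt * h.sqrt = A := by
  have hU : (star h.1.eigenvectorUnitary : Mat) * (h.1.eigenvectorUnitary : Mat) = 1 :=
    Unitary.coe_star_mul_self _
  have hD : diagonal ((↑) ∘ (√·) ∘ h.1.eigenvalues : Fin d → ℝ) *
      diagonal ((↑) ∘ (√·) ∘ h.1.eigenvalues : Fin d → ℝ) =
      diagonal (RCLike.ofReal ∘ h.1.eigenvalues) := by
    rw [diagonal_mul_diagonal]; congr 1; ext i
    simp [Real.mul_self_sqrt (h.eigenvalues_nonneg i)]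
  conv_rhs => rw [h.1.spectral_theorem, Unitary.conjStarAlgAut_apply]
  rw [Matrix.PosSemidef.sqrt]
  simp only [Matrix.mul_assoc]
  rw [← Matrix.mul_assoc (star (h.1.eigenvectorUnitary : Mat)) (h.1.eigenvectorUnitary : Mat), hU,
    Matrix.one_mul, ← Matrix.mul_assoc (diagonal _) (diagonal _), hD]



lemma herm_transpose {A : Mat} (hA : A.IsHermitian) : Aᵀ = A := by
  rw [← conjTranspose_eq_transpose_of_trivial]; exact hA

lemma psd_diag_nonneg {M : Mat} (hM : M.PosSemidef) (i : Fin d) : 0 ≤ M i i := by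
  have := hM.dotProduct_mulVec_nonneg (Pi.single i 1)
  simpa [dotProduct, mulVec, Pi.single_apply, Finset.mul_sum] using this

lemma psd_trace_nonneg {M : Mat} (hM : M.PosSemidef) : 0 ≤ M.trace := by
  exact Finset.sum_nonneg fun i _ => psd_diag_nonneg hM i

lemma psd_smul {M : Mat} {c : ℝ} (hc : 0 ≤ c) (hM : M.PosSemidef) : (c • M).PosSemidef := by
  refine Matrix.PosSemidef.of_dotProduct_mulVec_nonneg (by unfold Matrix.IsHermitian; rw [conjTranspose_smul, star_trivial, hM.1]) fun x => ?_
  have := hM.dotProduct_mulVec_nonneg x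
  simp only [smul_mulVec, dotProduct_smul, smul_eq_mul]
  positivity

lemma trace_mul_psd_nonneg {P Q : Mat} (hP : P.PosSemidef) (hQ : Q.PosSemidef) :
    0 ≤ (P * Q).trace := by
  have h1 : P * Q = P * (hQ.sqrt * hQ.sqrt) := by rw [hQ.sqrt_mul_self]
  have h2 : (P * (hQ.sqrt * hQ.sqrt)).trace = (hQ.sqrt * P * hQ.sqrt).trace := by
    rw [← mul_assoc, trace_mul_comm, mul_assoc]
  rw [h1, h2]
  have hpsd : (hQ.sqrtᴴ * P * hQ.sqrt).PosSemidef := hP.conjTranspose_mul_mul_same hQ.sqrt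
  rw [hQ.posSemidef_sqrt.1] at hpsd
  exact psd_trace_nonneg hpsd



lemma trace_transpose_mul_eq {m n : ℕ} (A B : Matrix (Fin m) (Fin n) ℝ) :
    (Aᵀ * B).trace = ∑ p : Fin m × Fin n, A p.1 p.2 * B p.1 p.2 := by
  simp only [Matrix.trace, Matrix.diag, Matrix.mul_apply, transpose_apply]
  rw [Finset.sum_comm, ← Finset.sum_product']
  rw [← Finset.univ_product_univ]


lemma frob_sq {m n : ℕ} (A : Matrix (Fin m) (Fin n) ℝ) :
    (Aᵀ * A).trace = ∑ p : Fin m × Fin n, A p.1 p.2 ^ 2 := by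
  rw [trace_transpose_mul_eq]; simp [pow_two]

lemma frob_nonneg {m n : ℕ} (A : Matrix (Fin m) (Fin n) ℝ) : 0 ≤ frob A :=
  Real.sqrt_nonneg _

lemma abs_trace_mul_le (A B : Mat) :
    |(Aᵀ * B).trace| ≤ frob A * frob B := by
  have cs := Finset.sum_mul_sq_le_sq_mul_sq Finset.univ (fun p : Fin d × Fin d => A p.1 p.2)
    (fun p => B p.1 p.2)
  rw [← Real.sqrt_sq_eq_abs ((Aᵀ * B).trace)]
  rw [frob, frob]
  rw [← Real.sqrt_mul (by rw [frob_sq]; positivity)]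
  apply Real.sqrt_le_sqrt
  rw [trace_transpose_mul_eq, frob_sq, frob_sq]
  simpa using cs

lemma frob_neg' {m n : ℕ} (A B : Matrix (Fin m) (Fin n) ℝ) : frob (A - B) = frob (B - A) := by
  unfold frob
  congr 1
  have h : A - B = -(B - A) := by abel
  rw [h, transpose_neg, Matrix.neg_mul, Matrix.mul_neg, neg_neg]

lemma frob_smul {m n : ℕ} (c : ℝ) (hc : 0 ≤ c) (A : Matrix (Fin m) (Fin n) ℝ) :
    frob (c • A) = c * frob A := by
  unfold frob
  rw [transpose_smul, Matrix.smul_mul, Matrix.mul_smul, smul_smul, trace_smul, smul_eq_mul,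
    Real.sqrt_mul (by positivity), Real.sqrt_mul_self hc]
lemma frob_mono {A B : Mat} (hA : A.PosSemidef) (hAB : (B - A).PosSemidef) :
    frob A ≤ frob B := by
  have hB : B.PosSemidef := by have := hA.add hAB; simpa using this
  unfold frob
  apply Real.sqrt_le_sqrt
  rw [herm_transpose hA.1, herm_transpose hB.1]
  have key : (B * B).trace - (A * A).trace = ((B - A) * B).trace + (A * (B - A)).trace := by
    simp [Matrix.sub_mul, Matrix.mul_sub, Matrix.trace_sub]
  have h1 : 0 ≤ ((B - A) * B).trace := trace_mul_psd_nonneg hAB hB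
  have h2 : 0 ≤ (A * (B - A)).trace := trace_mul_psd_nonneg hA hAB
  linarith

lemma eig_ge {M : Mat} (hM : M.IsHermitian) (c : ℝ) (h : (M - c • 1).PosSemidef) (i : Fin d) :
    c ≤ hM.eigenvalues i := by
  set v : Fin d → ℝ := ⇑(hM.eigenvectorBasis i) with hv
  have hmv : M *ᵥ v = hM.eigenvalues i • v := hM.mulVec_eigenvectorBasis i
  have hvv : dotProduct v v = 1 := by
    have hnorm := hM.eigenvectorBasis.orthonormal.1 i
    have : (inner ℝ (hM.eigenvectorBasis i) (hM.eigenvectorBasis i) : ℝ) = 1 := by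
      rw [real_inner_self_eq_norm_sq, hnorm]; norm_num
    rw [← this]
    simp only [PiLp.inner_apply, dotProduct, hv, RCLike.inner_apply, conj_trivial]
  have h2 := h.dotProduct_mulVec_nonneg v
  have hvne : star v = v := by simp
  rw [hvne, Matrix.sub_mulVec, hmv] at h2
  have : (c • (1 : Mat)) *ᵥ v = c • v := by
    rw [Matrix.smul_mulVec, Matrix.one_mulVec]
  rw [this, dotProduct_sub, dotProduct_smul, dotProduct_smul, hvv] at h2
  simpa using h2

lemma conj_unitary_psd {f : Fin d → ℝ} (hf : ∀ i, 0 ≤ f i) (U : Mat) :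
    (U * Matrix.diagonal f * star U).PosSemidef := by
  have hd : (Matrix.diagonal f).PosSemidef := Matrix.PosSemidef.diagonal (by intro i; exact hf i)
  have := hd.mul_mul_conjTranspose_same U
  rwa [← Matrix.star_eq_conjTranspose] at this

lemma smul_one_conj (U : Mat) (hU : U * star U = 1) (c : ℝ) :
    c • (1 : Mat) = U * Matrix.diagonal (fun _ => c) * star U := by
  have h1 : Matrix.diagonal (fun _ : Fin d => c) = c • (1 : Mat) := by
    ext i j
    by_cases h : i = j <;> simp [Matrix.diagonal_apply, Matrix.one_apply, h]
  rw [h1, Matrix.mul_smul, Matrix.mul_one, Matrix.smul_mul, hU]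

lemma sqrt_ge {M : Mat} (hM : M.PosSemidef) {lam : ℝ} (hl : 0 ≤ lam)
    (h : (M - lam ^ 2 • 1).PosSemidef) : (hM.sqrt - lam • 1).PosSemidef := by
  have hUU : (hM.1.eigenvectorUnitary : Mat) * star (hM.1.eigenvectorUnitary : Mat) = 1 := by
    exact Matrix.mem_unitaryGroup_iff.mp (hM.1.eigenvectorUnitary).2
  have key : hM.sqrt - lam • 1 = (hM.1.eigenvectorUnitary : Mat) *
      Matrix.diagonal (fun i => Real.sqrt (hM.1.eigenvalues i) - lam) *
      star (hM.1.eigenvectorUnitary : Mat) := by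
    rw [Matrix.PosSemidef.sqrt, smul_one_conj _ hUU lam]
    rw [← Matrix.sub_mul, ← Matrix.mul_sub, Matrix.diagonal_sub]
    rfl
  rw [key]
  apply conj_unitary_psd
  intro i
  have h1 : lam ^ 2 ≤ hM.1.eigenvalues i := eig_ge hM.1 _ h i
  have : lam ≤ Real.sqrt (hM.1.eigenvalues i) := by
    rw [show lam = Real.sqrt (lam ^ 2) by rw [Real.sqrt_sq hl]]
    exact Real.sqrt_le_sqrt h1
  linarith

lemma sqrt_posdef {M : Mat} (hM : M.PosSemidef) (hMd : M.PosDef) : hM.sqrt.PosDef := by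
  refine Matrix.PosDef.of_dotProduct_mulVec_pos hM.posSemidef_sqrt.1 fun x hx => ?_
  rcases lt_or_eq_of_le (hM.posSemidef_sqrt.dotProduct_mulVec_nonneg x) with h | h
  · exact h
  · exfalso
    have h0 : hM.sqrt *ᵥ x = 0 := (hM.posSemidef_sqrt.dotProduct_mulVec_zero_iff x).mp h.symm
    have hMx : M *ᵥ x = 0 := by
      rw [← hM.sqrt_mul_self, ← Matrix.mulVec_mulVec, h0, Matrix.mulVec_zero]
    have := hMd.dotProduct_mulVec_pos hx
    rw [hMx, dotProduct_zero] at this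
    exact lt_irrefl _ this
lemma dot_sym {P : Mat} (hP : Pᵀ = P) (y z : Fin d → ℝ) :
    y ⬝ᵥ (P *ᵥ z) = (P *ᵥ y) ⬝ᵥ z := by
  rw [Matrix.dotProduct_mulVec, ← Matrix.mulVec_transpose, hP]

lemma posdef_isunit_det {P : Mat} (hP : P.PosDef) : IsUnit P.det :=
  (Matrix.isUnit_iff_isUnit_det P).mp hP.isUnit

lemma smul_one_isHermitian (c : ℝ) : (c • (1 : Mat)).IsHermitian := by
  unfold Matrix.IsHermitian
  rw [conjTranspose_smul, star_trivial, Matrix.conjTranspose_one]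

lemma inv_le_of_ge {P : Mat} (hP : P.PosDef) {lam : ℝ} (hl : 0 < lam)
    (h : (P - lam • 1).PosSemidef) : (lam⁻¹ • (1 : Mat) - P⁻¹).PosSemidef := by
  have hPi : P⁻¹.PosDef := hP.inv
  have hPt : Pᵀ = P := herm_transpose hP.1
  set Q : Mat := P - lam • 1 with hQdef
  have hQQ : P * P - lam • P = Q * Q + lam • Q := by
    simp only [hQdef, Matrix.sub_mul, Matrix.mul_sub, Matrix.smul_mul, Matrix.mul_smul,
      Matrix.one_mul, Matrix.mul_one, smul_smul, smul_sub]
    abel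
  have hQQpsd : (Q * Q + lam • Q).PosSemidef := by
    have h1 : (Qᴴ * Q).PosSemidef := Matrix.posSemidef_conjTranspose_mul_self Q
    rw [h.1] at h1
    exact h1.add (psd_smul hl.le h)
  refine Matrix.PosSemidef.of_dotProduct_mulVec_nonneg ((smul_one_isHermitian lam⁻¹).sub hPi.1) fun x => ?_
  set y : Fin d → ℝ := P⁻¹ *ᵥ x with hy
  have hxy : P *ᵥ y = x := by
    rw [hy, Matrix.mulVec_mulVec, Matrix.mul_nonsing_inv P (posdef_isunit_det hP),
      Matrix.one_mulVec]
  have key : 0 ≤ y ⬝ᵥ ((P * P - lam • P) *ᵥ y) := by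
    rw [hQQ]
    have := hQQpsd.dotProduct_mulVec_nonneg y
    simpa using this
  have e1 : y ⬝ᵥ ((P * P) *ᵥ y) = x ⬝ᵥ x := by
    rw [← Matrix.mulVec_mulVec, dot_sym hPt, hxy]
  have e2 : y ⬝ᵥ (P *ᵥ y) = x ⬝ᵥ y := by
    rw [dot_sym hPt, hxy]
  rw [Matrix.sub_mulVec, Matrix.smul_mulVec, dotProduct_sub, dotProduct_smul] at key
  rw [e1, e2] at key
  have hge : lam * (x ⬝ᵥ y) ≤ x ⬝ᵥ x := by simpa using key
  have goal_eq : star x ⬝ᵥ ((lam⁻¹ • (1 : Mat) - P⁻¹) *ᵥ x) =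
      lam⁻¹ * (x ⬝ᵥ x) - x ⬝ᵥ y := by
    simp [Matrix.sub_mulVec, Matrix.smul_mulVec, Matrix.one_mulVec, dotProduct_sub, hy]
  rw [goal_eq]
  have : x ⬝ᵥ y ≤ lam⁻¹ * (x ⬝ᵥ x) := by
    rw [inv_mul_eq_div, le_div_iff₀ hl]
    linarith [hge]
  linarith

lemma key_ineq {A B : Mat} (hA : A.PosSemidef) (hB : B.PosSemidef) (hBd : B.PosDef) :
    hA.sqrt.trace - hB.sqrt.trace ≤ (1 / 2) * ((hB.sqrt)⁻¹ * (A - B)).trace := by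
  set P : Mat := hB.sqrt with hPdef
  set R : Mat := P⁻¹ with hRdef
  set S : Mat := hA.sqrt with hSdef
  have hPd : P.PosDef := sqrt_posdef hB hBd
  have hRP : R * P = 1 := Matrix.nonsing_inv_mul P (posdef_isunit_det hPd)
  have hPR : P * R = 1 := Matrix.mul_nonsing_inv P (posdef_isunit_det hPd)
  have hRpsd : R.PosSemidef := hPd.inv.posSemidef
  set C : Mat := S - P with hCdef
  have hCh : Cᴴ = C := (hA.posSemidef_sqrt.1.sub hPd.1)
  have hCC : (C * C).PosSemidef := by
    have h1 : (Cᴴ * C).PosSemidef := Matrix.posSemidef_conjTranspose_mul_self C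
    rwa [hCh] at h1
  have h0 : 0 ≤ (R * (C * C)).trace := trace_mul_psd_nonneg hRpsd hCC
  have expand : R * (C * C) = R * (S * S) - R * (S * P) - R * (P * S) + R * (P * P) := by
    rw [hCdef]
    simp only [Matrix.sub_mul, Matrix.mul_sub, Matrix.mul_add, Matrix.add_mul]
    abel
  have tSP : (R * (S * P)).trace = S.trace := by
    rw [Matrix.trace_mul_comm, Matrix.mul_assoc, hPR, Matrix.mul_one]
  have tPS : (R * (P * S)).trace = S.trace := by
    rw [← Matrix.mul_assoc, hRP, Matrix.one_mul]
  have tPP : (R * (P * P)).trace = P.trace := by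
    rw [← Matrix.mul_assoc, hRP, Matrix.one_mul]
  have hSS : S * S = A := hA.sqrt_mul_self
  have hPP : P * P = B := hB.sqrt_mul_self
  have expand2 : (R * (C * C)).trace = (R * A).trace - 2 * S.trace + P.trace := by
    rw [expand, hSS]
    rw [Matrix.trace_add, Matrix.trace_sub, Matrix.trace_sub, tSP, tPS, tPP]
    ring
  have hRAB : (R * (A - B)).trace = (R * A).trace - P.trace := by
    rw [Matrix.mul_sub, Matrix.trace_sub, ← hPP, tPP]
  rw [expand2] at h0
  rw [hRAB]
  linarith
lemma smul_one_posdef {c : ℝ} (hc : 0 < c) : (c • (1 : Mat)).PosDef := by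
  refine Matrix.PosDef.of_dotProduct_mulVec_pos (smul_one_isHermitian c) fun x hx => ?_
  have h1 : (c • (1 : Mat)) *ᵥ x = c • x := by
    rw [Matrix.smul_mulVec, Matrix.one_mulVec]
  rw [h1, dotProduct_smul, star_trivial, smul_eq_mul]
  have h2 : 0 < x ⬝ᵥ x := by
    have := Matrix.dotProduct_star_self_pos_iff (v := x)
    simp only [star_trivial] at this
    exact this.mpr hx
  positivity

lemma one_side (T A A' : Mat) (hT : T.PosSemidef) (hA : A.PosSemidef)
    (hA' : A'.PosSemidef) {lam : ℝ} (hlam : 0 < lam)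
    (hM : (hT.sqrt * A * hT.sqrt + lam ^ 2 • 1).PosSemidef)
    (hM' : (hT.sqrt * A' * hT.sqrt + lam ^ 2 • 1).PosSemidef) :
    hM'.sqrt.trace - hM.sqrt.trace ≤ frob T / (2 * lam) * frob (A' - A) := by
  set S : Mat := hT.sqrt with hSdef
  have hSh : Sᴴ = S := hT.posSemidef_sqrt.1
  have hSS : S * S = T := hT.sqrt_mul_self
  have hconj : (S * A * S).PosSemidef := by
    have := hA.conjTranspose_mul_mul_same S; rwa [hSh] at this
  have hMd : (S * A * S + lam ^ 2 • (1 : Mat)).PosDef :=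
    Matrix.PosDef.posSemidef_add hconj (smul_one_posdef (by positivity))
  have hMlb : ((S * A * S + lam ^ 2 • (1 : Mat)) - lam ^ 2 • 1).PosSemidef := by
    simpa using hconj
  have hPd : hM.sqrt.PosDef := sqrt_posdef hM hMd
  set R : Mat := (hM.sqrt)⁻¹ with hRdef
  have hRpsd : R.PosSemidef := hPd.inv.posSemidef
  have h1 := key_ineq hM' hM hMd
  set Δ : Mat := A' - A with hΔdef
  have hdiff : (S * A' * S + lam ^ 2 • (1 : Mat)) - (S * A * S + lam ^ 2 • 1) = S * Δ * S := by
    rw [hΔdef]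
    simp only [Matrix.mul_sub, Matrix.sub_mul]
    abel
  rw [hdiff] at h1
  set G : Mat := S * R * S with hGdef
  have cyc : (R * (S * Δ * S)).trace = (G * Δ).trace := by
    rw [show R * (S * Δ * S) = (R * S * Δ) * S by simp only [Matrix.mul_assoc],
      Matrix.trace_mul_comm,
      show S * (R * S * Δ) = G * Δ by rw [hGdef]; simp only [Matrix.mul_assoc]]
  rw [cyc] at h1
  have hGt : Gᵀ = G := by
    have hRt : Rᵀ = R := herm_transpose hPd.inv.1
    have hSt : Sᵀ = S := herm_transpose hT.posSemidef_sqrt.1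
    rw [hGdef, Matrix.transpose_mul, Matrix.transpose_mul, hRt, hSt]
    simp only [Matrix.mul_assoc]
  have hGpsd : G.PosSemidef := by
    have := hRpsd.conjTranspose_mul_mul_same S; rwa [hSh] at this
  have hge : (hM.sqrt - lam • 1).PosSemidef := sqrt_ge hM hlam.le hMlb
  have hinv : (lam⁻¹ • (1 : Mat) - R).PosSemidef := inv_le_of_ge hPd hlam hge
  have hGle : ((lam⁻¹ • T) - G).PosSemidef := by
    have hc := hinv.conjTranspose_mul_mul_same S
    rw [hSh] at hc
    have he : S * (lam⁻¹ • (1 : Mat) - R) * S = lam⁻¹ • T - G := by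
      rw [Matrix.mul_sub, Matrix.sub_mul, Matrix.mul_smul, Matrix.mul_one,
        Matrix.smul_mul, hSS, hGdef]
    rwa [he] at hc
  have hfG : frob G ≤ lam⁻¹ * frob T := by
    have := frob_mono hGpsd hGle
    rwa [frob_smul lam⁻¹ (by positivity) T] at this
  have htr : (G * Δ).trace ≤ frob G * frob Δ := by
    have h2 := abs_trace_mul_le G Δ
    rw [hGt] at h2
    exact le_trans (le_abs_self _) h2
  have hfΔ : 0 ≤ frob Δ := frob_nonneg Δ
  have hfG0 : 0 ≤ frob G := frob_nonneg G
  calc hM'.sqrt.trace - hM.sqrt.trace ≤ (1 / 2) * (G * Δ).trace := h1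
    _ ≤ (1 / 2) * (frob G * frob Δ) := by linarith
    _ ≤ (1 / 2) * ((lam⁻¹ * frob T) * frob Δ) := by
        have := mul_le_mul_of_nonneg_right hfG hfΔ
        linarith
    _ = frob T / (2 * lam) * frob Δ := by field_simp


/-- g(T̂) = tr((T^{1/2} T̂ T^{1/2} + λ²I)^{1/2} − λI) is
(‖T‖₂/(2λ))-Lipschitz in the Hilbert-Schmidt norm on PSD matrices. -/
theorem stmt7 {d : ℕ} (T That That' : Matrix (Fin d) (Fin d) ℝ)
    (hT : T.PosSemidef) (h1 : That.PosSemidef) (h2 : That'.PosSemidef)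
    (lam : ℝ) (hlam : 0 < lam) :
    |(psqrt (psqrt T * That * psqrt T + lam ^ 2 • (1 : Matrix (Fin d) (Fin d) ℝ)) -
        lam • (1 : Matrix (Fin d) (Fin d) ℝ)).trace -
      (psqrt (psqrt T * That' * psqrt T + lam ^ 2 • (1 : Matrix (Fin d) (Fin d) ℝ)) -
        lam • (1 : Matrix (Fin d) (Fin d) ℝ)).trace| ≤
      frob T / (2 * lam) * frob (That - That') := by
  have hpsT : psqrt T = hT.sqrt := dif_pos hT
  rw [hpsT]
  have hSh : (hT.sqrt)ᴴ = hT.sqrt := hT.posSemidef_sqrt.1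
  have mkM : ∀ (A : Matrix (Fin d) (Fin d) ℝ), A.PosSemidef →
      (hT.sqrt * A * hT.sqrt + lam ^ 2 • (1 : Matrix (Fin d) (Fin d) ℝ)).PosSemidef := by
    intro A hA
    have hconj : (hT.sqrt * A * hT.sqrt).PosSemidef := by
      have := hA.conjTranspose_mul_mul_same hT.sqrt; rwa [hSh] at this
    exact hconj.add (psd_smul (by positivity) Matrix.PosSemidef.one)
  have hM : (hT.sqrt * That * hT.sqrt + lam ^ 2 • (1 : Matrix (Fin d) (Fin d) ℝ)).PosSemidef :=
    mkM That h1
  have hM' : (hT.sqrt * That' * hT.sqrt + lam ^ 2 • (1 : Matrix (Fin d) (Fin d) ℝ)).PosSemidef :=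
    mkM That' h2
  have e1 : psqrt (hT.sqrt * That * hT.sqrt + lam ^ 2 • (1 : Matrix (Fin d) (Fin d) ℝ)) =
      hM.sqrt := dif_pos hM
  have e2 : psqrt (hT.sqrt * That' * hT.sqrt + lam ^ 2 • (1 : Matrix (Fin d) (Fin d) ℝ)) =
      hM'.sqrt := dif_pos hM'
  rw [e1, e2]
  rw [Matrix.trace_sub, Matrix.trace_sub]
  have key1 := one_side T That' That hT h2 h1 hlam hM' hM
  have key2 := one_side T That That' hT h1 h2 hlam hM hM'
  rw [frob_neg'] at key2
  rw [abs_sub_le_iff]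
  constructor <;> linarith
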